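/- Let W ⊆ ℝ^K be an (R−1)-dimensional linear subspace (2 ≤ R) contained in {w : wᵀ1_K = 0}, and suppose there exist w_1,…,w_{R−1} ∈ W and x_1,…,x_{R−1} ∈ ℝ^K with ‖w_i‖₁ = 1, ‖x_i‖_∞ = 1, and w_iᵀx_j = δ_{ij} (an Auerbach system). Define w̄ ∈ ℝ^K by w̄_k = Σ_i |w_{i,k}|, and B = (1/(R−1))(1_K w̄ᵀ − X Wᵀ) where W = (w_1,…,w_{R−1}) and X = (x_1,…,x_{R−1}) as K×(R−1) matrices. Then: (a) B has nonnegative entries; (b) B·1_K = 1_K; (c) Wᵀ B = −(1/(R−1)) Wᵀ. -/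

import Mathlib

/-- The Auerbach-system construction of an adversarial garbling: given an Auerbach system
`(w_i, x_i)` in the subspace orthogonal to the all-ones vector, the matrix
`B = (1/(R−1))(1 w̄ᵀ − X Wᵀ)` is nonnegative, row-stochastic, and satisfies
`Wᵀ B = −(1/(R−1)) Wᵀ`. -/
theorem stmt12 (K R : ℕ) (hR : 2 ≤ R) (hRK : R - 1 ≤ K)
    (w x : Fin (R - 1) → Fin K → ℝ)
    (hw1 : ∀ i, ∑ k, |w i k| = 1)
    (hxle : ∀ i k, |x i k| ≤ 1)
    (hx1 : ∀ i, ∃ k, |x i k| = 1)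
    (hdual : ∀ i j, ∑ k, w i k * x j k = if i = j then 1 else 0)
    (horth : ∀ i, ∑ k, w i k = 0) :
    (∀ j k, 0 ≤ (1 / ((R:ℝ) - 1)) * ((∑ i, |w i k|) - ∑ i, x i j * w i k)) ∧
    (∀ j, ∑ k, (1 / ((R:ℝ) - 1)) * ((∑ i, |w i k|) - ∑ i, x i j * w i k) = 1) ∧
    (∀ i k, ∑ j, w i j * ((1 / ((R:ℝ) - 1)) * ((∑ i', |w i' k|) - ∑ i', x i' j * w i' k))
        = -(1 / ((R:ℝ) - 1)) * w i k) := by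
  have h2 : (2:ℝ) ≤ (R:ℝ) := by exact_mod_cast hR
  have hc : (0:ℝ) < (R:ℝ) - 1 := by linarith
  have hcard : ((R - 1 : ℕ) : ℝ) = (R:ℝ) - 1 := by
    have : 1 ≤ R := by omega
    push_cast [this]
    ring
  refine ⟨?_, ?_, ?_⟩
  · intro j k
    apply mul_nonneg (by positivity)
    rw [sub_nonneg]
    refine Finset.sum_le_sum fun i _ => ?_
    calc x i j * w i k ≤ |x i j * w i k| := le_abs_self _
      _ = |x i j| * |w i k| := abs_mul _ _
      _ ≤ 1 * |w i k| := mul_le_mul_of_nonneg_right (hxle i j) (abs_nonneg _)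
      _ = |w i k| := one_mul _
  · intro j
    rw [← Finset.mul_sum, Finset.sum_sub_distrib]
    have e1 : ∑ k, ∑ i, |w i k| = ((R:ℝ) - 1) := by
      rw [Finset.sum_comm, Finset.sum_congr rfl fun i _ => hw1 i]
      simp [hcard]
    have e2 : ∑ k, ∑ i, x i j * w i k = 0 := by
      rw [Finset.sum_comm]
      simp [← Finset.mul_sum, horth]
    rw [e1, e2]
    field_simp
    ring
  · intro i k
    have swap : ∑ j, ∑ i', w i j * (x i' j * w i' k)
        = ∑ i', (∑ j, w i j * x i' j) * w i' k := by
      rw [Finset.sum_comm]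
      exact Finset.sum_congr rfl fun i' _ => by rw [Finset.sum_mul]; exact Finset.sum_congr rfl fun j _ => by ring
    have key : ∑ i', (∑ j, w i j * x i' j) * w i' k = w i k := by
      simp only [hdual]
      simp
    have expand : ∀ j, w i j * ((1 / ((R:ℝ) - 1)) * ((∑ i', |w i' k|) - ∑ i', x i' j * w i' k))
        = (1 / ((R:ℝ) - 1)) * (w i j * ∑ i', |w i' k|)
          - (1 / ((R:ℝ) - 1)) * ∑ i', w i j * (x i' j * w i' k) := fun j => by
      rw [← Finset.mul_sum]
      ring
    simp only [expand]
    rw [Finset.sum_sub_distrib, ← Finset.mul_sum, ← Finset.mul_sum, ← Finset.sum_mul,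
      horth, swap, key]
    ring
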